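/- Let n ≥ 2 be a positive integer. The number of pairs (q,d) with q ≥ 2, d ≥ 2 integers and (q^d−1)/(q−1) = n is at most the number of distinct prime divisors of n − 1, provided each such q is a prime power. -/

import Mathlib

private lemma decomp7 (q d n : ℕ) (hd : 2 ≤ d)
    (hsum : ∑ i ∈ Finset.range d, q ^ i = n) :
    ∃ t, n = 1 + q + q ^ 2 * t := by
  obtain ⟨e, rfl⟩ : ∃ e, d = e + 2 := ⟨d - 2, by omega⟩
  refine ⟨∑ i ∈ Finset.range e, q ^ i, ?_⟩
  rw [← hsum, Finset.sum_range_succ', Finset.sum_range_succ']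
  simp only [show ∀ k : ℕ, q ^ (k + 1 + 1) = q * (q * q ^ k) from fun k => by ring,
    pow_zero, zero_add, pow_one, ← Finset.mul_sum]
  ring

private lemma sumlt7 (q d1 d2 : ℕ) (hq : 2 ≤ q) (h : d1 < d2) :
    ∑ i ∈ Finset.range d1, q ^ i < ∑ i ∈ Finset.range d2, q ^ i := by
  apply Finset.sum_lt_sum_of_subset (Finset.range_subset_range.2 h.le)
    (i := d1) (by simpa using h) (by simp) (by positivity)
  intro j _ _; positivity

private lemma aux7 (p a b n t : ℕ) (hp : p.Prime) (ha : 1 ≤ a) (hab : a < b)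
    (hn : n = 1 + p ^ a + (p ^ a) ^ 2 * t) (hdvd : p ^ b ∣ n - 1) : False := by
  have h1 : n - 1 = p ^ a * (1 + p ^ a * t) := by
    have : n = 1 + p ^ a * (1 + p ^ a * t) := by rw [hn]; ring
    omega
  have h2 : p ^ a * p ∣ p ^ a * (1 + p ^ a * t) := by
    rw [← h1, ← pow_succ]
    exact dvd_trans (pow_dvd_pow p (by omega)) hdvd
  have h3 : p ∣ 1 + p ^ a * t :=
    (mul_dvd_mul_iff_left (pow_ne_zero a hp.pos.ne')).1 h2
  have h4 : p ∣ p ^ a * t := Dvd.dvd.mul_right (dvd_pow_self p (by omega)) t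
  have : p ∣ 1 := (Nat.dvd_add_right h4).1 (by rwa [add_comm] at h3)
  exact hp.one_lt.ne' (Nat.dvd_one.1 this)

theorem stmt7 (n : ℕ) (hn : 2 ≤ n) :
    {p : ℕ × ℕ | 2 ≤ p.1 ∧ 2 ≤ p.2 ∧ IsPrimePow p.1 ∧
      ∑ i ∈ Finset.range p.2, p.1 ^ i = n}.ncard ≤ (n - 1).primeFactors.card := by
  classical
  set S := {p : ℕ × ℕ | 2 ≤ p.1 ∧ 2 ≤ p.2 ∧ IsPrimePow p.1 ∧
      ∑ i ∈ Finset.range p.2, p.1 ^ i = n} with hS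
  have hmaps : ∀ x ∈ S, x.1.minFac ∈ ((n - 1).primeFactors : Set ℕ) := by
    rintro ⟨q, d⟩ ⟨hq, hd, _, hsum⟩
    obtain ⟨t, ht⟩ := decomp7 q d n hd hsum
    have hqd : q ∣ n - 1 := by
      have h1 : n = 1 + q * (1 + q * t) := by rw [ht]; ring
      exact ⟨1 + q * t, by omega⟩
    have hne : n - 1 ≠ 0 := by
      have h2 : 2 ≤ q := hq
      obtain ⟨M, hM⟩ : ∃ M, q ^ 2 * t = M := ⟨_, rfl⟩
      omega
    simp only [Set.mem_setOf_eq] at hq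
    refine Finset.mem_coe.2 (Nat.mem_primeFactors.2 ⟨Nat.minFac_prime (by omega), ?_, hne⟩)
    exact dvd_trans (Nat.minFac_dvd q) hqd
  have hinj : Set.InjOn (fun x : ℕ × ℕ => x.1.minFac) S := by
    rintro ⟨q1, d1⟩ h1 ⟨q2, d2⟩ h2 hfe
    obtain ⟨hq1, hd1, hpp1, hs1⟩ := h1
    obtain ⟨hq2, hd2, hpp2, hs2⟩ := h2
    simp only at hq1 hd1 hs1 hq2 hd2 hs2 hfe
    obtain ⟨p, a, hp, ha, rfl⟩ := hpp1
    obtain ⟨p', b, hp', hb, rfl⟩ := hpp2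
    rw [hp.nat_prime.pow_minFac (by omega), hp'.nat_prime.pow_minFac (by omega)] at hfe
    subst hfe
    obtain ⟨t1, ht1⟩ := decomp7 _ d1 n hd1 hs1
    obtain ⟨t2, ht2⟩ := decomp7 _ d2 n hd2 hs2
    have hdvd : ∀ c t, n = 1 + p ^ c + (p ^ c) ^ 2 * t → p ^ c ∣ n - 1 := by
      intro c t ht
      have h1 : n = 1 + p ^ c * (1 + p ^ c * t) := by rw [ht]; ring
      exact ⟨1 + p ^ c * t, by omega⟩
    have hab : a = b := by
      by_contra hne
      rcases Nat.lt_or_ge a b with h | h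
      · exact aux7 p a b n t1 hp.nat_prime ha h ht1 (hdvd b t2 ht2)
      · exact aux7 p b a n t2 hp.nat_prime hb (by omega) ht2 (hdvd a t1 ht1)
    subst hab
    have hd12 : d1 = d2 := by
      by_contra hne
      rcases Nat.lt_or_ge d1 d2 with h | h
      · exact absurd (hs1.trans hs2.symm) (sumlt7 _ d1 d2 hq1 h).ne
      · exact absurd (hs2.trans hs1.symm) (sumlt7 _ d2 d1 hq1 (by omega)).ne
    rw [hd12]
  calc S.ncard ≤ ((n - 1).primeFactors : Set ℕ).ncard :=
        Set.ncard_le_ncard_of_injOn (fun x : ℕ × ℕ => x.1.minFac) hmaps hinj (Set.finite_coe_iff.1 inferInstance)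
    _ = (n - 1).primeFactors.card := Set.ncard_coe_finset _
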